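/- Let E* be a set of unordered pairs {j,k}, j ≠ k, of indices in {1,…,d}, and suppose β̂ satisfies: (i) β̂_{jk} = β̂_{kj} = 0 for every pair {j,k} ∉ E*; (ii) β̂ restricted to the pairs in E* is a global minimizer of the restricted SpaCE JAM objective in which all blocks outside E* are constrained to be zero; and (iii) strict dual feasibility: for every pair {j,k} ∉ E*, ‖(1/n) Ψ_{jk}ᵀ r_j‖₂² + ‖(1/n) Ψ_{kj}ᵀ r_k‖₂² < n λ², where r_j = x_j − Σ_{l≠j} Ψ_{jl} β̂_{jl}. Then β̂ is a global minimizer of the full objective F, and every global minimizer β̃ of F satisfies β̃_{jk} = β̃_{kj} = 0 for all pairs {j,k} ∉ E*; hence the estimated edge set {(j,k) : ‖β̃_{jk}‖₂² + ‖β̃_{kj}‖₂² ≠ 0} is contained in E* for every global minimizer. -/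

import Mathlib

open Matrix
open scoped Classical

/-- Squared Euclidean norm ‖v‖₂² of a vector in ℝ^n. -/
noncomputable def sqNorm {n : ℕ} (v : Fin n → ℝ) : ℝ := ∑ i, v i ^ 2

/-- The SpaCE JAM objective
F(β) = (1/(2n)) Σ_j ‖x_j − Σ_{k≠j} Ψ_{jk}β_{jk}‖₂²
       + λ Σ_{k>j} (‖Ψ_{jk}β_{jk}‖₂² + ‖Ψ_{kj}β_{kj}‖₂²)^{1/2}. -/
noncomputable def spaceJamObj (n r d : ℕ) (lam : ℝ)
    (x : Fin d → Fin n → ℝ)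
    (Ψ : Fin d → Fin d → Matrix (Fin n) (Fin r) ℝ)
    (β : Fin d → Fin d → Fin r → ℝ) : ℝ :=
  (1 / (2 * (n : ℝ))) * ∑ j, sqNorm (fun i =>
      x j i - ∑ k ∈ Finset.univ.filter (fun k => k ≠ j), (Ψ j k).mulVec (β j k) i)
  + lam * ∑ p ∈ Finset.univ.filter (fun p : Fin d × Fin d => p.1 < p.2),
      Real.sqrt (sqNorm ((Ψ p.1 p.2).mulVec (β p.1 p.2))
        + sqNorm ((Ψ p.2 p.1).mulVec (β p.2 p.1)))

/- ### auxiliary lemmas -/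

lemma sqNorm_nonneg {n : ℕ} (v : Fin n → ℝ) : 0 ≤ sqNorm v :=
  Finset.sum_nonneg fun _ _ => sq_nonneg _

lemma sqNorm_pos {n : ℕ} {v : Fin n → ℝ} (hv : v ≠ 0) : 0 < sqNorm v := by
  obtain ⟨i, hi⟩ := Function.ne_iff.1 hv
  exact Finset.sum_pos' (fun _ _ => sq_nonneg _)
    ⟨i, Finset.mem_univ _, by simpa using pow_pos (abs_pos.2 hi) 2 |>.trans_eq (by rw [sq_abs])⟩

lemma sqNorm_smul {n : ℕ} (c : ℝ) (v : Fin n → ℝ) : sqNorm (c • v) = c^2 * sqNorm v := by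
  simp [sqNorm, Finset.mul_sum, mul_pow]

lemma sqNorm_zero {n : ℕ} : sqNorm (0 : Fin n → ℝ) = 0 := by simp [sqNorm]

lemma sqNorm_add {n : ℕ} (a b : Fin n → ℝ) :
    sqNorm (a + b) = sqNorm a + 2 * (∑ i, a i * b i) + sqNorm b := by
  simp only [sqNorm, Pi.add_apply, ← Finset.sum_add_distrib, Finset.mul_sum]
  exact Finset.sum_congr rfl fun i _ => by ring

lemma sqNorm_sub {n : ℕ} (a b : Fin n → ℝ) :
    sqNorm (a - b) = sqNorm a - 2 * (a ⬝ᵥ b) + sqNorm b := by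
  simp only [sqNorm, Pi.sub_apply, ← Finset.sum_add_distrib, ← Finset.sum_sub_distrib,
    dotProduct, Finset.mul_sum]
  exact Finset.sum_congr rfl fun i _ => by ring

/-- Cauchy–Schwarz for a concatenated pair of vectors. -/
lemma pair_cs {r r' : ℕ} (z1 w1 : Fin r → ℝ) (z2 w2 : Fin r' → ℝ) :
    (∑ i, z1 i * w1 i) + (∑ i, z2 i * w2 i)
      ≤ Real.sqrt (sqNorm z1 + sqNorm z2) * Real.sqrt (sqNorm w1 + sqNorm w2) := by
  have := Real.sum_mul_le_sqrt_mul_sqrt (Finset.univ : Finset (Fin r ⊕ Fin r'))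
    (Sum.elim z1 z2) (Sum.elim w1 w2)
  simpa [Fintype.sum_sum_type, sqNorm] using this

/-- the pair norm on ℝ^n × ℝ^n -/
noncomputable def N2 {n : ℕ} (a b : Fin n → ℝ) : ℝ := Real.sqrt (sqNorm a + sqNorm b)

lemma N2_nonneg {n : ℕ} (a b : Fin n → ℝ) : 0 ≤ N2 a b := Real.sqrt_nonneg _

lemma N2_zero {n : ℕ} : N2 (0 : Fin n → ℝ) 0 = 0 := by simp [N2, sqNorm_zero]

lemma N2_smul {n : ℕ} {c : ℝ} (hc : 0 ≤ c) (a b : Fin n → ℝ) :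
    N2 (c • a) (c • b) = c * N2 a b := by
  rw [N2, sqNorm_smul, sqNorm_smul, ← mul_add, N2, Real.sqrt_mul (by positivity),
    Real.sqrt_sq hc]

lemma N2_triangle {n : ℕ} (a1 a2 b1 b2 : Fin n → ℝ) :
    N2 (a1 + b1) (a2 + b2) ≤ N2 a1 a2 + N2 b1 b2 := by
  have hA := sqNorm_nonneg a1; have hA2 := sqNorm_nonneg a2
  have hB := sqNorm_nonneg b1; have hB2 := sqNorm_nonneg b2
  have h1 : sqNorm (a1 + b1) + sqNorm (a2 + b2)
      ≤ (N2 a1 a2 + N2 b1 b2)^2 := by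
    have hcs := pair_cs a1 b1 a2 b2
    have e1 : N2 a1 a2 ^ 2 = sqNorm a1 + sqNorm a2 := Real.sq_sqrt (by linarith)
    have e2 : N2 b1 b2 ^ 2 = sqNorm b1 + sqNorm b2 := Real.sq_sqrt (by linarith)
    rw [sqNorm_add, sqNorm_add, add_sq, e1, e2]
    have : (∑ i, a1 i * b1 i) + (∑ i, a2 i * b2 i) ≤ N2 a1 a2 * N2 b1 b2 := hcs
    linarith
  calc N2 (a1 + b1) (a2 + b2) = Real.sqrt (sqNorm (a1+b1) + sqNorm (a2+b2)) := rfl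
    _ ≤ Real.sqrt ((N2 a1 a2 + N2 b1 b2)^2) := Real.sqrt_le_sqrt h1
    _ = N2 a1 a2 + N2 b1 b2 :=
        Real.sqrt_sq (by have := N2_nonneg a1 a2; have := N2_nonneg b1 b2; linarith)

lemma N2_combo {n : ℕ} {t : ℝ} (h0 : 0 ≤ t) (h1 : t ≤ 1) (a b c e : Fin n → ℝ) :
    N2 (a + t • c) (b + t • e) - N2 a b ≤ t * (N2 (a + c) (b + e) - N2 a b) := by
  have e1 : a + t • c = (1-t) • a + t • (a + c) := by
    funext i; simp [Pi.smul_apply, smul_eq_mul]; ring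
  have e2 : b + t • e = (1-t) • b + t • (b + e) := by
    funext i; simp [Pi.smul_apply, smul_eq_mul]; ring
  have key : N2 (a + t • c) (b + t • e) ≤ (1 - t) * N2 a b + t * N2 (a+c) (b+e) := by
    rw [e1, e2]
    calc N2 ((1-t) • a + t • (a+c)) ((1-t) • b + t • (b+e))
        ≤ N2 ((1-t) • a) ((1-t) • b) + N2 (t • (a+c)) (t • (b+e)) := N2_triangle _ _ _ _
      _ = (1 - t) * N2 a b + t * N2 (a+c) (b+e) := by
          rw [N2_smul (by linarith), N2_smul h0]
  linarith

lemma sqNorm_dot {n : ℕ} (v : Fin n → ℝ) : sqNorm v = v ⬝ᵥ v := by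
  simp [sqNorm, dotProduct, sq]

lemma dot_mulVec_eq {n r : ℕ} (M : Matrix (Fin n) (Fin r) ℝ) (R : Fin n → ℝ) (w : Fin r → ℝ) :
    R ⬝ᵥ (M *ᵥ w) = (Mᵀ *ᵥ R) ⬝ᵥ w := by
  rw [Matrix.dotProduct_mulVec]
  congr 1
  rw [← Matrix.transpose_transpose M, Matrix.vecMul_transpose, Matrix.transpose_transpose]

lemma sqNorm_mulVec {n r : ℕ} (hn : 0 < n) (M : Matrix (Fin n) (Fin r) ℝ)
    (h : (1 / (n : ℝ)) • (Mᵀ * M) = 1) (v : Fin r → ℝ) :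
    sqNorm (M *ᵥ v) = n * sqNorm v := by
  have hn' : (n : ℝ) ≠ 0 := Nat.cast_ne_zero.2 hn.ne'
  have hMM : Mᵀ * M = (n : ℝ) • (1 : Matrix (Fin r) (Fin r) ℝ) := by
    have := congrArg (fun A => (n : ℝ) • A) h
    simp only [smul_smul] at this
    rw [mul_one_div_cancel hn', one_smul] at this
    exact this
  rw [sqNorm_dot, dot_mulVec_eq, Matrix.mulVec_mulVec, hMM, sqNorm_dot]
  simp [Matrix.smul_mulVec, Matrix.one_mulVec, smul_dotProduct, smul_eq_mul]

lemma small_t {L q : ℝ} (hq : 0 ≤ q) (h : ∀ t : ℝ, 0 < t → t ≤ 1 → 0 ≤ L + t * q) : 0 ≤ L := by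
  by_contra hL
  push_neg at hL
  have hq1 : 0 < q + 1 := by linarith
  set t := min 1 (-L / (q + 1)) with ht
  have ht0 : 0 < t := lt_min one_pos (div_pos (by linarith) hq1)
  have htle : t ≤ -L / (q + 1) := min_le_right _ _
  have h2 : t * q ≤ (-L / (q+1)) * q := mul_le_mul_of_nonneg_right htle hq
  have hlt : (-L / (q+1)) * q < -L := by
    rw [div_mul_eq_mul_div, div_lt_iff₀ hq1]
    nlinarith
  linarith [h t ht0 (min_le_left _ _)]

lemma sum_offdiag {d : ℕ} (f : Fin d → Fin d → ℝ) :
    ∑ j, ∑ k ∈ Finset.univ.filter (fun k => k ≠ j), f j k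
      = ∑ p ∈ Finset.univ.filter (fun p : Fin d × Fin d => p.1 < p.2),
          (f p.1 p.2 + f p.2 p.1) := by
  classical
  set g : Fin d × Fin d → ℝ := fun p => if p.2 ≠ p.1 then f p.1 p.2 else 0 with hg
  have hL : ∑ j, ∑ k ∈ Finset.univ.filter (fun k => k ≠ j), f j k
      = ∑ p : Fin d × Fin d, g p := by
    rw [Fintype.sum_prod_type]
    refine Finset.sum_congr rfl fun j _ => ?_
    rw [Finset.sum_filter]
  rw [hL, ← Finset.sum_filter_add_sum_filter_not Finset.univ
    (fun p : Fin d × Fin d => p.1 < p.2) g]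
  have hB : ∑ p ∈ Finset.univ.filter (fun p : Fin d × Fin d => ¬ p.1 < p.2), g p
      = ∑ p ∈ Finset.univ.filter (fun p : Fin d × Fin d => p.2 < p.1), g p := by
    refine (Finset.sum_subset ?_ ?_).symm
    · exact Finset.monotone_filter_right _ (fun p _ h => not_lt_of_gt h)
    · intro p hp hnp
      simp only [Finset.mem_filter, Finset.mem_univ, true_and] at hp hnp
      have : p.1 = p.2 := le_antisymm (not_lt.1 hnp) (not_lt.1 hp)
      simp [hg, this]
  have hC : ∑ p ∈ Finset.univ.filter (fun p : Fin d × Fin d => p.2 < p.1), g p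
      = ∑ p ∈ Finset.univ.filter (fun p : Fin d × Fin d => p.1 < p.2), g (p.2, p.1) := by
    refine Finset.sum_bij (fun p _ => (p.2, p.1)) ?_ ?_ ?_ ?_
    · intro p hp; simp only [Finset.mem_filter, Finset.mem_univ, true_and] at hp ⊢; exact hp
    · intro p _ q _ h
      exact Prod.ext (congrArg Prod.snd h) (congrArg Prod.fst h)
    · intro p hp; exact ⟨(p.2, p.1), by simpa using (Finset.mem_filter.1 hp).2, rfl⟩
    · intro p _; rfl
  rw [hB, hC, ← Finset.sum_add_distrib]
  refine Finset.sum_congr rfl fun p hp => ?_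
  have hlt : p.1 < p.2 := (Finset.mem_filter.1 hp).2
  simp [hg, hlt.ne, hlt.ne']

/- ### structure of the objective -/

noncomputable def sjA {n r d : ℕ} (Ψ : Fin d → Fin d → Matrix (Fin n) (Fin r) ℝ)
    (γ : Fin d → Fin d → Fin r → ℝ) (j : Fin d) : Fin n → ℝ :=
  fun i => ∑ k ∈ Finset.univ.filter (fun k => k ≠ j), (Ψ j k).mulVec (γ j k) i

noncomputable def sjR {n r d : ℕ} (x : Fin d → Fin n → ℝ)
    (Ψ : Fin d → Fin d → Matrix (Fin n) (Fin r) ℝ)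
    (β : Fin d → Fin d → Fin r → ℝ) (j : Fin d) : Fin n → ℝ :=
  fun i => x j i - sjA Ψ β j i

noncomputable def sjPEN {n r d : ℕ} (Ψ : Fin d → Fin d → Matrix (Fin n) (Fin r) ℝ)
    (β : Fin d → Fin d → Fin r → ℝ) : ℝ :=
  ∑ p ∈ Finset.univ.filter (fun p : Fin d × Fin d => p.1 < p.2),
    N2 ((Ψ p.1 p.2) *ᵥ β p.1 p.2) ((Ψ p.2 p.1) *ᵥ β p.2 p.1)

lemma spaceJamObj_eq (n r d : ℕ) (lam : ℝ) (x : Fin d → Fin n → ℝ)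
    (Ψ : Fin d → Fin d → Matrix (Fin n) (Fin r) ℝ) (β : Fin d → Fin d → Fin r → ℝ) :
    spaceJamObj n r d lam x Ψ β
      = (1 / (2 * (n : ℝ))) * ∑ j, sqNorm (sjR x Ψ β j) + lam * sjPEN Ψ β := rfl

lemma sjA_add {n r d : ℕ} (Ψ : Fin d → Fin d → Matrix (Fin n) (Fin r) ℝ)
    (γ δ : Fin d → Fin d → Fin r → ℝ) (j : Fin d) :
    sjA Ψ (γ + δ) j = sjA Ψ γ j + sjA Ψ δ j := by
  funext i
  simp [sjA, Pi.add_apply, Matrix.mulVec_add, Finset.sum_add_distrib]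

lemma sjA_smul {n r d : ℕ} (Ψ : Fin d → Fin d → Matrix (Fin n) (Fin r) ℝ)
    (t : ℝ) (γ : Fin d → Fin d → Fin r → ℝ) (j : Fin d) :
    sjA Ψ (t • γ) j = t • sjA Ψ γ j := by
  funext i
  simp [sjA, Pi.smul_apply, Matrix.mulVec_smul, Finset.mul_sum, smul_eq_mul]

lemma sjR_add {n r d : ℕ} (x : Fin d → Fin n → ℝ)
    (Ψ : Fin d → Fin d → Matrix (Fin n) (Fin r) ℝ)
    (β γ : Fin d → Fin d → Fin r → ℝ) (j : Fin d) :
    sjR x Ψ (β + γ) j = sjR x Ψ β j - sjA Ψ γ j := by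
  funext i
  simp [sjR, sjA_add, Pi.sub_apply, Pi.add_apply]
  ring

lemma dot_sjA {n r d : ℕ} (Ψ : Fin d → Fin d → Matrix (Fin n) (Fin r) ℝ)
    (R : Fin n → ℝ) (γ : Fin d → Fin d → Fin r → ℝ) (j : Fin d) :
    R ⬝ᵥ sjA Ψ γ j = ∑ k ∈ Finset.univ.filter (fun k => k ≠ j), R ⬝ᵥ ((Ψ j k) *ᵥ γ j k) := by
  simp only [dotProduct, sjA, Finset.mul_sum]
  exact Finset.sum_comm

lemma obj_expand (n r d : ℕ) (hn : 0 < n) (lam : ℝ) (x : Fin d → Fin n → ℝ)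
    (Ψ : Fin d → Fin d → Matrix (Fin n) (Fin r) ℝ) (β γ : Fin d → Fin d → Fin r → ℝ) :
    spaceJamObj n r d lam x Ψ (β + γ)
      = spaceJamObj n r d lam x Ψ β
        - (1 / (n : ℝ)) * ∑ j, (sjR x Ψ β j ⬝ᵥ sjA Ψ γ j)
        + (1 / (2 * (n : ℝ))) * ∑ j, sqNorm (sjA Ψ γ j)
        + lam * (sjPEN Ψ (β + γ) - sjPEN Ψ β) := by
  have hn' : (n : ℝ) ≠ 0 := Nat.cast_ne_zero.2 hn.ne'
  rw [spaceJamObj_eq, spaceJamObj_eq]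
  have hq : ∑ j, sqNorm (sjR x Ψ (β + γ) j)
      = ∑ j, sqNorm (sjR x Ψ β j) - 2 * ∑ j, (sjR x Ψ β j ⬝ᵥ sjA Ψ γ j)
        + ∑ j, sqNorm (sjA Ψ γ j) := by
    rw [Finset.mul_sum, ← Finset.sum_sub_distrib, ← Finset.sum_add_distrib]
    refine Finset.sum_congr rfl fun j _ => ?_
    rw [sjR_add, sqNorm_sub]
  rw [hq]
  field_simp
  ring

/-- **Primal–dual witness: strict dual feasibility certifies support recovery.**
Let E* be a symmetric set of (ordered versions of unordered) pairs.  If β̂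
(i) vanishes on all blocks outside E*, (ii) globally minimizes F restricted to
coefficients supported on E*, and (iii) satisfies strict dual feasibility
‖(1/n)Ψ_{jk}ᵀr_j‖₂² + ‖(1/n)Ψ_{kj}ᵀr_k‖₂² < nλ² for every pair {j,k} ∉ E*,
then β̂ is a global minimizer of F, and every global minimizer of F vanishes on
all blocks outside E*; hence the estimated edge set of any global minimizer is
contained in E*. -/
theorem spaceJam_primal_dual_witness
    (n r d : ℕ) (hn : 0 < n) (lam : ℝ) (hlam : 0 < lam)
    (x : Fin d → Fin n → ℝ)
    (Ψ : Fin d → Fin d → Matrix (Fin n) (Fin r) ℝ)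
    (horth : ∀ j k : Fin d, j ≠ k → (1 / (n : ℝ)) • ((Ψ j k)ᵀ * Ψ j k) = 1)
    (Estar : Set (Fin d × Fin d))
    (hsymm : ∀ j k : Fin d, (j, k) ∈ Estar ↔ (k, j) ∈ Estar)
    (hirrefl : ∀ j : Fin d, (j, j) ∉ Estar)
    (βh : Fin d → Fin d → Fin r → ℝ)
    (hsupp : ∀ j k : Fin d, j ≠ k → (j, k) ∉ Estar → βh j k = 0)
    (hrestrmin : ∀ β : Fin d → Fin d → Fin r → ℝ,
      (∀ j k : Fin d, j ≠ k → (j, k) ∉ Estar → β j k = 0) →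
      spaceJamObj n r d lam x Ψ βh ≤ spaceJamObj n r d lam x Ψ β)
    (hdual : ∀ j k : Fin d, j ≠ k → (j, k) ∉ Estar →
      sqNorm ((1 / (n : ℝ)) • (Ψ j k)ᵀ.mulVec (fun i =>
          x j i - ∑ l ∈ Finset.univ.filter (fun l => l ≠ j),
            (Ψ j l).mulVec (βh j l) i))
      + sqNorm ((1 / (n : ℝ)) • (Ψ k j)ᵀ.mulVec (fun i =>
          x k i - ∑ l ∈ Finset.univ.filter (fun l => l ≠ k),
            (Ψ k l).mulVec (βh k l) i))
        < n * lam ^ 2) :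
    (∀ β, spaceJamObj n r d lam x Ψ βh ≤ spaceJamObj n r d lam x Ψ β)
    ∧ (∀ βt : Fin d → Fin d → Fin r → ℝ,
        (∀ β, spaceJamObj n r d lam x Ψ βt ≤ spaceJamObj n r d lam x Ψ β) →
        (∀ j k : Fin d, j ≠ k → (j, k) ∉ Estar → βt j k = 0)
        ∧ {p : Fin d × Fin d | p.1 ≠ p.2 ∧
            ¬(βt p.1 p.2 = 0 ∧ βt p.2 p.1 = 0)} ⊆ Estar) := by
  classical
  have hn' : (n : ℝ) ≠ 0 := Nat.cast_ne_zero.2 hn.ne'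
  have hnpos : (0:ℝ) < n := by exact_mod_cast hn
  set F := spaceJamObj n r d lam x Ψ with hF
  set Rj := sjR x Ψ βh with hRj
  -- per-pair dual bound
  have pairbd : ∀ j k : Fin d, j ≠ k → (j, k) ∉ Estar → ∀ w1 w2 : Fin r → ℝ,
      ((1 / (n:ℝ)) * ((Rj j ⬝ᵥ ((Ψ j k) *ᵥ w1)) + (Rj k ⬝ᵥ ((Ψ k j) *ᵥ w2)))
        ≤ lam * N2 ((Ψ j k) *ᵥ w1) ((Ψ k j) *ᵥ w2))
      ∧ (¬(w1 = 0 ∧ w2 = 0) →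
        (1 / (n:ℝ)) * ((Rj j ⬝ᵥ ((Ψ j k) *ᵥ w1)) + (Rj k ⬝ᵥ ((Ψ k j) *ᵥ w2)))
          < lam * N2 ((Ψ j k) *ᵥ w1) ((Ψ k j) *ᵥ w2)) := by
    intro j k hjk hS w1 w2
    have horth1 := horth j k hjk
    have horth2 := horth k j hjk.symm
    have hd' : sqNorm ((1/(n:ℝ)) • ((Ψ j k)ᵀ *ᵥ Rj j))
        + sqNorm ((1/(n:ℝ)) • ((Ψ k j)ᵀ *ᵥ Rj k)) < n * lam^2 := by
      exact hdual j k hjk hS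
    have dotz : ∀ (M : Matrix (Fin n) (Fin r) ℝ) (R0 : Fin n → ℝ) (w : Fin r → ℝ),
        (1/(n:ℝ)) * (R0 ⬝ᵥ (M *ᵥ w)) = ((1/(n:ℝ)) • (Mᵀ *ᵥ R0)) ⬝ᵥ w := by
      intro M R0 w
      rw [dot_mulVec_eq, smul_dotProduct, smul_eq_mul]
    have hsplit : (1 / (n:ℝ)) * ((Rj j ⬝ᵥ ((Ψ j k) *ᵥ w1)) + (Rj k ⬝ᵥ ((Ψ k j) *ᵥ w2)))
        = ((1/(n:ℝ)) • ((Ψ j k)ᵀ *ᵥ Rj j)) ⬝ᵥ w1 + ((1/(n:ℝ)) • ((Ψ k j)ᵀ *ᵥ Rj k)) ⬝ᵥ w2 := by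
      rw [mul_add, dotz, dotz]
    have hcs : ((1/(n:ℝ)) • ((Ψ j k)ᵀ *ᵥ Rj j)) ⬝ᵥ w1 + ((1/(n:ℝ)) • ((Ψ k j)ᵀ *ᵥ Rj k)) ⬝ᵥ w2
        ≤ Real.sqrt (sqNorm ((1/(n:ℝ)) • ((Ψ j k)ᵀ *ᵥ Rj j))
            + sqNorm ((1/(n:ℝ)) • ((Ψ k j)ᵀ *ᵥ Rj k)))
          * Real.sqrt (sqNorm w1 + sqNorm w2) := by
      simpa [dotProduct] using
        pair_cs ((1/(n:ℝ)) • ((Ψ j k)ᵀ *ᵥ Rj j)) w1 ((1/(n:ℝ)) • ((Ψ k j)ᵀ *ᵥ Rj k)) w2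
    have hZnn : 0 ≤ sqNorm ((1/(n:ℝ)) • ((Ψ j k)ᵀ *ᵥ Rj j))
        + sqNorm ((1/(n:ℝ)) • ((Ψ k j)ᵀ *ᵥ Rj k)) :=
      add_nonneg (sqNorm_nonneg _) (sqNorm_nonneg _)
    have hWnn : 0 ≤ sqNorm w1 + sqNorm w2 := add_nonneg (sqNorm_nonneg _) (sqNorm_nonneg _)
    have hZlt : Real.sqrt (sqNorm ((1/(n:ℝ)) • ((Ψ j k)ᵀ *ᵥ Rj j))
        + sqNorm ((1/(n:ℝ)) • ((Ψ k j)ᵀ *ᵥ Rj k))) < Real.sqrt ((n:ℝ) * lam^2) :=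
      Real.sqrt_lt_sqrt hZnn hd'
    have hNeq : N2 ((Ψ j k) *ᵥ w1) ((Ψ k j) *ᵥ w2)
        = Real.sqrt ((n:ℝ)) * Real.sqrt (sqNorm w1 + sqNorm w2) := by
      rw [N2, sqNorm_mulVec hn _ horth1, sqNorm_mulVec hn _ horth2, ← mul_add,
        Real.sqrt_mul hnpos.le]
    have hlameq : Real.sqrt ((n:ℝ) * lam^2) = lam * Real.sqrt (n:ℝ) := by
      rw [mul_comm, Real.sqrt_mul (sq_nonneg lam), Real.sqrt_sq hlam.le]
    have hNval : lam * N2 ((Ψ j k) *ᵥ w1) ((Ψ k j) *ᵥ w2)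
        = Real.sqrt ((n:ℝ) * lam^2) * Real.sqrt (sqNorm w1 + sqNorm w2) := by
      rw [hNeq, hlameq]; ring
    constructor
    · rw [hsplit, hNval]
      exact hcs.trans (mul_le_mul_of_nonneg_right hZlt.le (Real.sqrt_nonneg _))
    · intro hw
      have hWpos : 0 < sqNorm w1 + sqNorm w2 := by
        rcases not_and_or.1 hw with h | h
        · have := sqNorm_pos h; have := sqNorm_nonneg w2; linarith
        · have := sqNorm_pos h; have := sqNorm_nonneg w1; linarith
      have hsW : 0 < Real.sqrt (sqNorm w1 + sqNorm w2) := Real.sqrt_pos.2 hWpos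
      rw [hsplit, hNval]
      exact lt_of_le_of_lt hcs (mul_lt_mul_of_pos_right hZlt hsW)
  -- the gap functional and its pairwise decomposition
  set D : (Fin d → Fin d → Fin r → ℝ) → ℝ :=
    fun w => lam * sjPEN Ψ w - (1/(n:ℝ)) * ∑ j, (Rj j ⬝ᵥ sjA Ψ w j) with hD
  have hDsum : ∀ w : Fin d → Fin d → Fin r → ℝ,
      D w = ∑ p ∈ Finset.univ.filter (fun p : Fin d × Fin d => p.1 < p.2),
        (lam * N2 ((Ψ p.1 p.2) *ᵥ w p.1 p.2) ((Ψ p.2 p.1) *ᵥ w p.2 p.1)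
          - (1/(n:ℝ)) * ((Rj p.1 ⬝ᵥ ((Ψ p.1 p.2) *ᵥ w p.1 p.2))
            + (Rj p.2 ⬝ᵥ ((Ψ p.2 p.1) *ᵥ w p.2 p.1)))) := by
    intro w
    have hlin : ∑ j, (Rj j ⬝ᵥ sjA Ψ w j)
        = ∑ p ∈ Finset.univ.filter (fun p : Fin d × Fin d => p.1 < p.2),
            ((Rj p.1 ⬝ᵥ ((Ψ p.1 p.2) *ᵥ w p.1 p.2))
              + (Rj p.2 ⬝ᵥ ((Ψ p.2 p.1) *ᵥ w p.2 p.1))) := by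
      calc ∑ j, (Rj j ⬝ᵥ sjA Ψ w j)
          = ∑ j, ∑ k ∈ Finset.univ.filter (fun k => k ≠ j), Rj j ⬝ᵥ ((Ψ j k) *ᵥ w j k) :=
            Finset.sum_congr rfl fun j _ => dot_sjA Ψ (Rj j) w j
        _ = _ := sum_offdiag (fun j k => Rj j ⬝ᵥ ((Ψ j k) *ᵥ w j k))
    simp only [hD, sjPEN]
    rw [hlin, Finset.mul_sum, Finset.mul_sum, ← Finset.sum_sub_distrib]
  -- nonnegativity of each pairwise term
  have hterm : ∀ (w : Fin d → Fin d → Fin r → ℝ),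
      (∀ j k : Fin d, ¬(j ≠ k ∧ (j,k) ∉ Estar) → w j k = 0) →
      ∀ p ∈ Finset.univ.filter (fun p : Fin d × Fin d => p.1 < p.2),
      0 ≤ lam * N2 ((Ψ p.1 p.2) *ᵥ w p.1 p.2) ((Ψ p.2 p.1) *ᵥ w p.2 p.1)
          - (1/(n:ℝ)) * ((Rj p.1 ⬝ᵥ ((Ψ p.1 p.2) *ᵥ w p.1 p.2))
            + (Rj p.2 ⬝ᵥ ((Ψ p.2 p.1) *ᵥ w p.2 p.1))) := by
    intro w hw p hp
    have hlt : p.1 < p.2 := (Finset.mem_filter.1 hp).2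
    by_cases hpS : (p.1, p.2) ∈ Estar
    · have hw1 : w p.1 p.2 = 0 := hw _ _ (by simp [hpS])
      have hw2 : w p.2 p.1 = 0 := hw _ _ (by simp [(hsymm _ _).1 hpS])
      simp [hw1, hw2, Matrix.mulVec_zero, N2_zero]
    · have := (pairbd p.1 p.2 hlt.ne hpS (w p.1 p.2) (w p.2 p.1)).1
      linarith
  have hDnonneg : ∀ (w : Fin d → Fin d → Fin r → ℝ),
      (∀ j k : Fin d, ¬(j ≠ k ∧ (j,k) ∉ Estar) → w j k = 0) → 0 ≤ D w := by
    intro w hw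
    rw [hDsum]
    exact Finset.sum_nonneg (hterm w hw)
  have hDpos : ∀ (w : Fin d → Fin d → Fin r → ℝ),
      (∀ j k : Fin d, ¬(j ≠ k ∧ (j,k) ∉ Estar) → w j k = 0) →
      ∀ j0 k0 : Fin d, j0 ≠ k0 → (j0, k0) ∉ Estar → w j0 k0 ≠ 0 → 0 < D w := by
    intro w hw j0 k0 hne hS hw0
    rw [hDsum]
    refine Finset.sum_pos' (hterm w hw) ?_
    rcases lt_or_gt_of_ne hne with hlt | hgt
    · refine ⟨(j0, k0), Finset.mem_filter.2 ⟨Finset.mem_univ _, hlt⟩, ?_⟩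
      have := (pairbd j0 k0 hne hS (w j0 k0) (w k0 j0)).2 (fun h => hw0 h.1)
      exact sub_pos.2 this
    · refine ⟨(k0, j0), Finset.mem_filter.2 ⟨Finset.mem_univ _, hgt⟩, ?_⟩
      have hS' : (k0, j0) ∉ Estar := fun h => hS ((hsymm k0 j0).1 h)
      have := (pairbd k0 j0 hne.symm hS' (w k0 j0) (w j0 k0)).2 (fun h => hw0 h.2)
      exact sub_pos.2 this
  -- first-order optimality from restricted minimality
  have hopt : ∀ u : Fin d → Fin d → Fin r → ℝ,
      (∀ j k : Fin d, j ≠ k → (j, k) ∉ Estar → u j k = 0) →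
      0 ≤ lam * (sjPEN Ψ (βh + u) - sjPEN Ψ βh)
        - (1/(n:ℝ)) * ∑ j, (Rj j ⬝ᵥ sjA Ψ u j) := by
    intro u hu
    have hqnn : 0 ≤ (1 / (2 * (n:ℝ))) * ∑ j, sqNorm (sjA Ψ u j) := by
      have : 0 ≤ ∑ j, sqNorm (sjA Ψ u j) := Finset.sum_nonneg fun j _ => sqNorm_nonneg _
      positivity
    refine small_t hqnn ?_
    intro t ht0 ht1
    have hsupp' : ∀ j k : Fin d, j ≠ k → (j, k) ∉ Estar → (βh + t • u) j k = 0 := by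
      intro j k hjk hSk
      simp [Pi.add_apply, Pi.smul_apply, hsupp j k hjk hSk, hu j k hjk hSk]
    have hmin := hrestrmin (βh + t • u) hsupp'
    rw [hF] at hmin
    rw [show spaceJamObj n r d lam x Ψ (βh + t • u)
        = spaceJamObj n r d lam x Ψ βh
          - (1 / (n : ℝ)) * ∑ j, (sjR x Ψ βh j ⬝ᵥ sjA Ψ (t • u) j)
          + (1 / (2 * (n : ℝ))) * ∑ j, sqNorm (sjA Ψ (t • u) j)
          + lam * (sjPEN Ψ (βh + t • u) - sjPEN Ψ βh) from
      obj_expand n r d hn lam x Ψ βh (t • u)] at hmin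
    have hlin : ∀ j, sjR x Ψ βh j ⬝ᵥ sjA Ψ (t • u) j = t * (sjR x Ψ βh j ⬝ᵥ sjA Ψ u j) := by
      intro j
      rw [sjA_smul, dotProduct_smul, smul_eq_mul]
    have hquad : ∀ j, sqNorm (sjA Ψ (t • u) j) = t^2 * sqNorm (sjA Ψ u j) := by
      intro j
      rw [sjA_smul, sqNorm_smul]
    have hpen : sjPEN Ψ (βh + t • u) - sjPEN Ψ βh
        ≤ t * (sjPEN Ψ (βh + u) - sjPEN Ψ βh) := by
      have hper : ∀ p ∈ Finset.univ.filter (fun p : Fin d × Fin d => p.1 < p.2),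
          N2 ((Ψ p.1 p.2) *ᵥ (βh + t • u) p.1 p.2) ((Ψ p.2 p.1) *ᵥ (βh + t • u) p.2 p.1)
            - N2 ((Ψ p.1 p.2) *ᵥ βh p.1 p.2) ((Ψ p.2 p.1) *ᵥ βh p.2 p.1)
          ≤ t * (N2 ((Ψ p.1 p.2) *ᵥ (βh + u) p.1 p.2) ((Ψ p.2 p.1) *ᵥ (βh + u) p.2 p.1)
            - N2 ((Ψ p.1 p.2) *ᵥ βh p.1 p.2) ((Ψ p.2 p.1) *ᵥ βh p.2 p.1)) := by
        intro p _
        have e1 : (Ψ p.1 p.2) *ᵥ (βh + t • u) p.1 p.2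
            = (Ψ p.1 p.2) *ᵥ βh p.1 p.2 + t • ((Ψ p.1 p.2) *ᵥ u p.1 p.2) := by
          simp [Pi.add_apply, Pi.smul_apply, Matrix.mulVec_add, Matrix.mulVec_smul]
        have e2 : (Ψ p.2 p.1) *ᵥ (βh + t • u) p.2 p.1
            = (Ψ p.2 p.1) *ᵥ βh p.2 p.1 + t • ((Ψ p.2 p.1) *ᵥ u p.2 p.1) := by
          simp [Pi.add_apply, Pi.smul_apply, Matrix.mulVec_add, Matrix.mulVec_smul]
        have e3 : (Ψ p.1 p.2) *ᵥ (βh + u) p.1 p.2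
            = (Ψ p.1 p.2) *ᵥ βh p.1 p.2 + (Ψ p.1 p.2) *ᵥ u p.1 p.2 := by
          simp [Pi.add_apply, Matrix.mulVec_add]
        have e4 : (Ψ p.2 p.1) *ᵥ (βh + u) p.2 p.1
            = (Ψ p.2 p.1) *ᵥ βh p.2 p.1 + (Ψ p.2 p.1) *ᵥ u p.2 p.1 := by
          simp [Pi.add_apply, Matrix.mulVec_add]
        rw [e1, e2, e3, e4]
        exact N2_combo ht0.le ht1 _ _ _ _
      have hsum := Finset.sum_le_sum hper
      simp only [sjPEN]
      rw [← Finset.sum_sub_distrib, ← Finset.sum_sub_distrib, Finset.mul_sum]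
      exact hsum
    -- combine
    have step : 0 ≤ t * (lam * (sjPEN Ψ (βh + u) - sjPEN Ψ βh)
          - (1/(n:ℝ)) * ∑ j, (Rj j ⬝ᵥ sjA Ψ u j))
        + t^2 * ((1 / (2 * (n:ℝ))) * ∑ j, sqNorm (sjA Ψ u j)) := by
      have hl : ∑ j, (sjR x Ψ βh j ⬝ᵥ sjA Ψ (t • u) j)
          = t * ∑ j, (Rj j ⬝ᵥ sjA Ψ u j) := by
        rw [Finset.mul_sum]
        exact Finset.sum_congr rfl fun j _ => hlin j
      have hq : ∑ j, sqNorm (sjA Ψ (t • u) j) = t^2 * ∑ j, sqNorm (sjA Ψ u j) := by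
        rw [Finset.mul_sum]
        exact Finset.sum_congr rfl fun j _ => hquad j
      rw [hl, hq] at hmin
      have hpen' : lam * (sjPEN Ψ (βh + t • u) - sjPEN Ψ βh)
          ≤ lam * (t * (sjPEN Ψ (βh + u) - sjPEN Ψ βh)) :=
        mul_le_mul_of_nonneg_left hpen hlam.le
      nlinarith [hmin, hpen']
    nlinarith [step, ht0, sq_nonneg t]
  -- main inequality
  have hkey : ∀ β u w : Fin d → Fin d → Fin r → ℝ,
      β = βh + (u + w) →
      (∀ j k : Fin d, j ≠ k → (j, k) ∉ Estar → u j k = 0) →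
      (∀ j k : Fin d, ¬(j ≠ k ∧ (j,k) ∉ Estar) → w j k = 0) →
      F βh + D w ≤ F β := by
    intro β u w hβ hu hw
    rw [hβ, hF, show spaceJamObj n r d lam x Ψ (βh + (u + w))
        = spaceJamObj n r d lam x Ψ βh
          - (1 / (n : ℝ)) * ∑ j, (sjR x Ψ βh j ⬝ᵥ sjA Ψ (u + w) j)
          + (1 / (2 * (n : ℝ))) * ∑ j, sqNorm (sjA Ψ (u + w) j)
          + lam * (sjPEN Ψ (βh + (u + w)) - sjPEN Ψ βh) from
      obj_expand n r d hn lam x Ψ βh (u + w)]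
    have hlin : ∑ j, (sjR x Ψ βh j ⬝ᵥ sjA Ψ (u + w) j)
        = ∑ j, (Rj j ⬝ᵥ sjA Ψ u j) + ∑ j, (Rj j ⬝ᵥ sjA Ψ w j) := by
      rw [← Finset.sum_add_distrib]
      refine Finset.sum_congr rfl fun j _ => ?_
      rw [sjA_add, dotProduct_add, hRj]
    have hpen : sjPEN Ψ (βh + (u + w)) = sjPEN Ψ (βh + u) + sjPEN Ψ w := by
      rw [sjPEN, sjPEN, sjPEN, ← Finset.sum_add_distrib]
      refine Finset.sum_congr rfl fun p hp => ?_
      have hlt : p.1 < p.2 := (Finset.mem_filter.1 hp).2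
      by_cases hpS : (p.1, p.2) ∈ Estar
      · have hw1 : w p.1 p.2 = 0 := hw _ _ (by simp [hpS])
        have hw2 : w p.2 p.1 = 0 := hw _ _ (by simp [(hsymm _ _).1 hpS])
        simp [Pi.add_apply, hw1, hw2, Matrix.mulVec_zero, N2_zero]
      · have hpS' : (p.2, p.1) ∉ Estar := fun h => hpS ((hsymm p.2 p.1).1 h)
        have hb1 : βh p.1 p.2 = 0 := hsupp _ _ hlt.ne hpS
        have hb2 : βh p.2 p.1 = 0 := hsupp _ _ hlt.ne' hpS'
        have hu1 : u p.1 p.2 = 0 := hu _ _ hlt.ne hpS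
        have hu2 : u p.2 p.1 = 0 := hu _ _ hlt.ne' hpS'
        simp [Pi.add_apply, hb1, hb2, hu1, hu2, Matrix.mulVec_zero, N2_zero]
    have hquad : 0 ≤ (1 / (2 * (n:ℝ))) * ∑ j, sqNorm (sjA Ψ (u + w) j) := by
      have : 0 ≤ ∑ j, sqNorm (sjA Ψ (u + w) j) := Finset.sum_nonneg fun j _ => sqNorm_nonneg _
      positivity
    have hu' := hopt u hu
    simp only [hD]
    rw [hlin, hpen]
    have : sjR x Ψ βh = Rj := hRj.symm
    linarith [hu']
  -- decomposition of an arbitrary β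
  have hdecomp : ∀ β : Fin d → Fin d → Fin r → ℝ,
      ∃ u w : Fin d → Fin d → Fin r → ℝ,
        β = βh + (u + w) ∧
        (∀ j k : Fin d, j ≠ k → (j, k) ∉ Estar → u j k = 0) ∧
        (∀ j k : Fin d, ¬(j ≠ k ∧ (j,k) ∉ Estar) → w j k = 0) ∧
        (∀ j k : Fin d, j ≠ k → (j,k) ∉ Estar → w j k = β j k - βh j k) := by
    intro β
    refine ⟨fun j k => if j ≠ k ∧ (j,k) ∉ Estar then 0 else β j k - βh j k,
      fun j k => if j ≠ k ∧ (j,k) ∉ Estar then β j k - βh j k else 0, ?_, ?_, ?_, ?_⟩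
    · funext j k s
      by_cases h : j ≠ k ∧ (j,k) ∉ Estar <;>
        simp [Pi.add_apply, h, Pi.sub_apply]
    · intro j k hjk hS; simp [hjk, hS]
    · intro j k h; simp [h]
    · intro j k hjk hS; simp [hjk, hS]
  refine ⟨?_, ?_⟩
  · -- βh is a global minimizer
    intro β
    obtain ⟨u, w, hβ, hu, hw, -⟩ := hdecomp β
    have h1 := hkey β u w hβ hu hw
    have h2 := hDnonneg w hw
    calc F βh ≤ F βh + D w := by linarith
      _ ≤ F β := h1
  · -- every global minimizer is supported on Estar
    intro βt hβt
    have hzero : ∀ j k : Fin d, j ≠ k → (j, k) ∉ Estar → βt j k = 0 := by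
      intro j k hjk hS
      by_contra hne0
      obtain ⟨u, w, hβ, hu, hw, hwval⟩ := hdecomp βt
      have hwjk : w j k ≠ 0 := by
        rw [hwval j k hjk hS, hsupp j k hjk hS, sub_zero]
        exact hne0
      have hpos := hDpos w hw j k hjk hS hwjk
      have h1 := hkey βt u w hβ hu hw
      have h2 := hβt βh
      linarith
    refine ⟨hzero, ?_⟩
    intro p hp
    by_contra hpS
    have h1 := hzero p.1 p.2 hp.1 hpS
    have h2 := hzero p.2 p.1 hp.1.symm (fun h => hpS ((hsymm p.2 p.1).1 h))
    exact hp.2 ⟨h1, h2⟩
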